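/- In the q-shuffle algebra V, for all n ∈ ℕ: Σ_{k=0}^{n} q^{2k−n} W_{−k} ⋆ W_{k−n} = Σ_{k=0}^{n} q^{n−2k} W_{−k} ⋆ W_{k−n} = q [2]_q^{n+1} x (xy+yx)^n x, where the right-hand side is computed in the free (concatenation) algebra. -/

import Mathlib

noncomputable section

/-- Words in the letters `x` (= `false`) and `y` (= `true`). -/
abbrev Wd := List Bool

/-- The underlying vector space of the free algebra `F⟨x,y⟩`,
with the words as a basis. -/
abbrev V (F : Type*) [Field F] := Wd →₀ F

/-- The pairing `⟨u,v⟩` on letters: `2` if equal, `-2` if distinct. -/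
def pr (a b : Bool) : ℤ := if a = b then 2 else -2

/-- `⟨u₁,b⟩ + ⟨u₂,b⟩ + ⋯ + ⟨u_r,b⟩` for a word `u` and a letter `b`. -/
def wsum (u : Wd) (b : Bool) : ℤ := (u.map fun a => pr a b).sum

variable {F : Type*} [Field F]

/-- Left multiplication by a letter, in the free (concatenation) algebra. -/
def lmul (a : Bool) (f : V F) : V F := Finsupp.mapDomain (fun w => a :: w) f

/-- The `q`-shuffle product of two words (as an element of `V F`), defined by
Rosso's recursion
`u ⋆ v = u₁((u₂⋯u_r) ⋆ v) + q^{⟨u₁,v₁⟩+⋯+⟨u_r,v₁⟩} v₁(u ⋆ (v₂⋯v_s))`. -/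
def sh (q : F) : Wd → Wd → V F
  | [], v => Finsupp.single v 1
  | u@(_ :: _), [] => Finsupp.single u 1
  | a :: u', b :: v' =>
      lmul a (sh q u' (b :: v')) +
        q ^ wsum (a :: u') b • lmul b (sh q (a :: u') v')
  termination_by u v => u.length + v.length
  decreasing_by all_goals (simp only [List.length_cons]; omega)

/-- The `q`-shuffle product on `V F`, extended bilinearly from words. -/
def st (q : F) (f g : V F) : V F :=
  f.sum fun u cu => g.sum fun v cv => (cu * cv) • sh q u v

/-- The concatenation (free-algebra) product on `V F`. -/
def cm (f g : V F) : V F :=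
  f.sum fun u cu => g.sum fun v cv => Finsupp.single (u ++ v) (cu * cv)

/-- Powers with respect to the concatenation product. -/
def cpow (f : V F) : ℕ → V F
  | 0 => Finsupp.single [] 1
  | n + 1 => cm f (cpow f n)

/-- The alternating word `W_{-k} = xyx⋯x` of length `2k+1`. -/
def altX : ℕ → Wd
  | 0 => [false]
  | k + 1 => false :: true :: altX k

/-- The alternating word `W_{k+1} = yxy⋯y` of length `2k+1`. -/
def altY : ℕ → Wd
  | 0 => [true]
  | k + 1 => true :: false :: altY k

/-- The alternating word `G_k = (yx)^k`. -/
def gw : ℕ → Wd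
  | 0 => []
  | k + 1 => true :: false :: gw k

/-- The alternating word `G̃_k = (xy)^k`. -/
def gtw : ℕ → Wd
  | 0 => []
  | k + 1 => false :: true :: gtw k

/-- `W_{-k}` as an element of `V F`. -/
def Wm (F : Type*) [Field F] (k : ℕ) : V F := Finsupp.single (altX k) 1

/-- `W_{k+1}` as an element of `V F`. -/
def Wp (F : Type*) [Field F] (k : ℕ) : V F := Finsupp.single (altY k) 1

/-- `G_k` as an element of `V F`. -/
def Gn (F : Type*) [Field F] (k : ℕ) : V F := Finsupp.single (gw k) 1

/-- `G̃_k` as an element of `V F`. -/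
def Gt (F : Type*) [Field F] (k : ℕ) : V F := Finsupp.single (gtw k) 1


namespace StmtAux

open Finsupp

variable {F : Type*} [Field F] (q : F)

/-! ### word lemmas -/

lemma altX_cons (k : ℕ) : altX k = false :: gw k := by
  induction k with
  | zero => rfl
  | succ k ih => simp [altX, gw, ih]

lemma gw_succ (k : ℕ) : gw (k + 1) = true :: altX k := by
  rw [gw, altX_cons]

lemma wsum_cons (a : Bool) (u : Wd) (b : Bool) :
    wsum (a :: u) b = pr a b + wsum u b := by
  simp [wsum]

lemma wsum_altX_false (k : ℕ) : wsum (altX k) false = 2 := by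
  induction k with
  | zero => rfl
  | succ k ih => simp [altX, wsum_cons, ih, pr]

lemma wsum_altX_true (k : ℕ) : wsum (altX k) true = -2 := by
  induction k with
  | zero => rfl
  | succ k ih => simp [altX, wsum_cons, ih, pr]

lemma wsum_gw (k : ℕ) (b : Bool) : wsum (gw k) b = 0 := by
  induction k with
  | zero => rfl
  | succ k ih => cases b <;> simp [gw, wsum_cons, ih, pr]

/-! ### lmul lemmas -/

lemma lmul_add (a : Bool) (f g : V F) : lmul a (f + g) = lmul a f + lmul a g :=
  Finsupp.mapDomain_add

lemma lmul_smul (a : Bool) (c : F) (f : V F) : lmul a (c • f) = c • lmul a f :=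
  Finsupp.mapDomain_smul c f

lemma lmul_single (a : Bool) (w : Wd) (c : F) :
    lmul a (Finsupp.single w c) = Finsupp.single (a :: w) c :=
  Finsupp.mapDomain_single

lemma lmul_sum (a : Bool) (s : Finset ℕ) (f : ℕ → V F) :
    lmul a (∑ i ∈ s, f i) = ∑ i ∈ s, lmul a (f i) :=
  Finsupp.mapDomain_finset_sum

/-! ### sh unfolding on alternating words -/

lemma sh_nil (v : Wd) : sh q [] v = Finsupp.single v 1 := by rw [sh]

lemma sh_cons_nil (a : Bool) (u : Wd) : sh q (a :: u) [] = Finsupp.single (a :: u) 1 := by rw [sh]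

lemma sh_altX_nil (k : ℕ) : sh q (altX k) [] = Finsupp.single (altX k) 1 := by
  rw [altX_cons, sh_cons_nil, ← altX_cons]

lemma sh_gw_nil (k : ℕ) : sh q (gw (k+1)) [] = Finsupp.single (gw (k+1)) 1 := by
  rw [gw_succ, sh_cons_nil, ← gw_succ]

lemma sh_xx (k m : ℕ) : sh q (altX k) (altX m) =
    lmul false (sh q (gw k) (altX m)) + q ^ (2:ℤ) • lmul false (sh q (altX k) (gw m)) := by
  conv_lhs => rw [altX_cons k, altX_cons m, sh]
  rw [← altX_cons, ← altX_cons, wsum_altX_false]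

lemma sh_gx (k m : ℕ) : sh q (gw (k+1)) (altX m) =
    lmul true (sh q (altX k) (altX m)) + lmul false (sh q (gw (k+1)) (gw m)) := by
  conv_lhs => rw [gw_succ k, altX_cons m, sh]
  rw [← gw_succ, ← altX_cons, wsum_gw]
  norm_num

lemma sh_xg (k m : ℕ) : sh q (altX k) (gw (m+1)) =
    lmul false (sh q (gw k) (gw (m+1))) + q ^ (-2:ℤ) • lmul true (sh q (altX k) (altX m)) := by
  conv_lhs => rw [altX_cons k, gw_succ m, sh]
  rw [← altX_cons, ← gw_succ, wsum_altX_true]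

lemma sh_gg (k m : ℕ) : sh q (gw (k+1)) (gw (m+1)) =
    lmul true (sh q (altX k) (gw (m+1))) + lmul true (sh q (gw (k+1)) (altX m)) := by
  conv_lhs => rw [gw_succ k, gw_succ m, sh]
  rw [← gw_succ, ← gw_succ, wsum_gw]
  norm_num


/-! ### the four weighted sums (unprimed: weight `q^(2k-n)`) -/

def AA (n : ℕ) : V F := ∑ k ∈ Finset.range (n+1),
  q ^ (2*(k:ℤ) - (n:ℤ)) • sh q (altX k) (altX (n-k))
def BB (n : ℕ) : V F := ∑ k ∈ Finset.range (n+1),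
  q ^ (2*(k:ℤ) - (n:ℤ)) • sh q (gw k) (altX (n-k))
def CC (n : ℕ) : V F := ∑ k ∈ Finset.range (n+1),
  q ^ (2*(k:ℤ) - (n:ℤ)) • sh q (altX k) (gw (n-k))
def DD (n : ℕ) : V F := ∑ k ∈ Finset.range (n+1),
  q ^ (2*(k:ℤ) - (n:ℤ)) • sh q (gw k) (gw (n-k))

variable {q}

lemma zps (hq : q ≠ 0) {a b c : ℤ} (h : a = b + c) : q ^ a = q ^ b * q ^ c := by
  rw [← zpow_add₀ hq, h]

lemma AA_rec (n : ℕ) :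
    AA q n = lmul false (BB q n) + q ^ (2:ℤ) • lmul false (CC q n) := by
  rw [AA, BB, CC, lmul_sum, lmul_sum, Finset.smul_sum, ← Finset.sum_add_distrib]
  refine Finset.sum_congr rfl fun k _ => ?_
  rw [sh_xx, smul_add, lmul_smul, lmul_smul, smul_comm (q ^ (2:ℤ)), smul_smul]

lemma BB_rec (hq : q ≠ 0) (n : ℕ) :
    BB q (n+1) = q ^ (1:ℤ) • lmul true (AA q n) + lmul false (DD q (n+1)) := by
  rw [BB, DD, AA, Finset.sum_range_succ' _ (n+1), Finset.sum_range_succ' _ (n+1),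
    lmul_add, lmul_sum, lmul_sum, Finset.smul_sum]
  have h1 : ∀ k ∈ Finset.range (n+1),
      q ^ (2*((k+1:ℕ):ℤ) - ((n+1:ℕ):ℤ)) • sh q (gw (k+1)) (altX (n+1-(k+1))) =
      q ^ (1:ℤ) • lmul true (q ^ (2*(k:ℤ) - (n:ℤ)) • sh q (altX k) (altX (n-k))) +
      lmul false (q ^ (2*((k+1:ℕ):ℤ) - ((n+1:ℕ):ℤ)) • sh q (gw (k+1)) (gw (n+1-(k+1)))) := by
    intro k _
    rw [show n+1-(k+1) = n-k from by omega, sh_gx, smul_add, lmul_smul, lmul_smul, smul_smul,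
      zps hq (show 2*((k+1:ℕ):ℤ) - ((n+1:ℕ):ℤ) = 1 + (2*(k:ℤ) - (n:ℤ)) by push_cast; ring)]
  rw [Finset.sum_congr rfl h1, Finset.sum_add_distrib]
  simp only [Nat.sub_zero]
  rw [show gw 0 = ([]:Wd) from rfl, sh_nil, sh_nil, lmul_smul, lmul_single,
    show (false :: gw (n+1) : Wd) = altX (n+1) from (altX_cons _).symm]
  abel

lemma CC_rec (hq : q ≠ 0) (n : ℕ) :
    CC q (n+1) = q ^ (-3:ℤ) • lmul true (AA q n) + lmul false (DD q (n+1)) := by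
  rw [CC, DD, AA, Finset.sum_range_succ _ (n+1), Finset.sum_range_succ _ (n+1),
    lmul_add, lmul_sum, lmul_sum, Finset.smul_sum]
  have h1 : ∀ k ∈ Finset.range (n+1),
      q ^ (2*(k:ℤ) - ((n+1:ℕ):ℤ)) • sh q (altX k) (gw (n+1-k)) =
      q ^ (-3:ℤ) • lmul true (q ^ (2*(k:ℤ) - (n:ℤ)) • sh q (altX k) (altX (n-k))) +
      lmul false (q ^ (2*(k:ℤ) - ((n+1:ℕ):ℤ)) • sh q (gw k) (gw (n+1-k))) := by
    intro k hk
    have hk' : k < n+1 := Finset.mem_range.mp hk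
    rw [show n+1-k = (n-k)+1 from by omega, sh_xg, smul_add, lmul_smul, lmul_smul, smul_smul,
      smul_smul,
      zps hq (show 2*(k:ℤ) - ((n+1:ℕ):ℤ) = -1 + (2*(k:ℤ) - (n:ℤ)) by push_cast; ring),
      show q ^ (-1:ℤ) * q ^ (2*(k:ℤ) - (n:ℤ)) * q ^ (-2:ℤ)
         = q ^ (-3:ℤ) * q ^ (2*(k:ℤ) - (n:ℤ)) by
        rw [← zpow_add₀ hq, ← zpow_add₀ hq, ← zpow_add₀ hq]; ring_nf]
    exact add_comm _ _
  rw [Finset.sum_congr rfl h1, Finset.sum_add_distrib, Nat.sub_self,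
    show gw 0 = ([]:Wd) from rfl, sh_altX_nil, sh_gw_nil,
    lmul_smul, lmul_single,
    show (false :: gw (n+1) : Wd) = altX (n+1) from (altX_cons _).symm]
  abel

lemma DD_rec (hq : q ≠ 0) (n : ℕ) :
    DD q (n+1) = q ^ (-1:ℤ) • lmul true (BB q n) + q ^ (1:ℤ) • lmul true (CC q n) := by
  rw [DD, BB, CC, Finset.sum_range_succ' _ (n+1), Finset.sum_range_succ _ n,
    Finset.sum_range_succ' _ n, Finset.sum_range_succ _ n,
    lmul_add, lmul_add, lmul_sum, lmul_sum, smul_add, smul_add, Finset.smul_sum,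
    Finset.smul_sum]
  have h1 : ∀ i ∈ Finset.range n,
      q ^ (2*((i+1:ℕ):ℤ) - ((n+1:ℕ):ℤ)) • sh q (gw (i+1)) (gw (n+1-(i+1))) =
      q ^ (-1:ℤ) • lmul true (q ^ (2*((i+1:ℕ):ℤ) - (n:ℤ)) • sh q (gw (i+1)) (altX (n-(i+1)))) +
      q ^ (1:ℤ) • lmul true (q ^ (2*(i:ℤ) - (n:ℤ)) • sh q (altX i) (gw (n-i))) := by
    intro i hi
    have hi' : i < n := Finset.mem_range.mp hi
    rw [show n+1-(i+1) = (n-(i+1))+1 from by omega, sh_gg,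
      show (n-(i+1))+1 = n-i from by omega, smul_add, lmul_smul, lmul_smul, smul_smul,
      smul_smul,
      zps hq (show 2*((i+1:ℕ):ℤ) - ((n+1:ℕ):ℤ) = 1 + (2*(i:ℤ) - (n:ℤ)) by push_cast; ring)]
    nth_rewrite 2 [show q ^ (1:ℤ) * q ^ (2*(i:ℤ) - (n:ℤ))
        = q ^ (-1:ℤ) * q ^ (2*((i+1:ℕ):ℤ) - (n:ℤ)) by
      rw [← zpow_add₀ hq, ← zpow_add₀ hq]; congr 1; push_cast; ring]
    exact add_comm _ _
  rw [Finset.sum_congr rfl h1, Finset.sum_add_distrib]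
  simp only [Nat.sub_self, Nat.sub_zero]
  rw [show gw 0 = ([]:Wd) from rfl, sh_nil, sh_nil, sh_altX_nil, sh_gw_nil,
    lmul_smul, lmul_smul, lmul_single,
    show (true :: altX n : Wd) = gw (n+1) from (gw_succ _).symm, smul_smul, smul_smul,
    show q ^ (-1:ℤ) * q ^ (2*((0:ℕ):ℤ) - (n:ℤ)) = q ^ (2*((0:ℕ):ℤ) - ((n+1:ℕ):ℤ)) from
      ((zps hq (by push_cast; ring)).symm),
    show q ^ (1:ℤ) * q ^ (2*(n:ℤ) - (n:ℤ)) = q ^ (2*((n+1:ℕ):ℤ) - ((n+1:ℕ):ℤ)) from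
      ((zps hq (by push_cast; ring)).symm)]
  abel

/-! ### primed sums: weight `q^(n-2k)` -/

variable (q)

def AP (n : ℕ) : V F := ∑ k ∈ Finset.range (n+1),
  q ^ ((n:ℤ) - 2*(k:ℤ)) • sh q (altX k) (altX (n-k))
def BP (n : ℕ) : V F := ∑ k ∈ Finset.range (n+1),
  q ^ ((n:ℤ) - 2*(k:ℤ)) • sh q (gw k) (altX (n-k))
def CP (n : ℕ) : V F := ∑ k ∈ Finset.range (n+1),
  q ^ ((n:ℤ) - 2*(k:ℤ)) • sh q (altX k) (gw (n-k))
def DP (n : ℕ) : V F := ∑ k ∈ Finset.range (n+1),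
  q ^ ((n:ℤ) - 2*(k:ℤ)) • sh q (gw k) (gw (n-k))

variable {q}

lemma AP_rec (n : ℕ) :
    AP q n = lmul false (BP q n) + q ^ (2:ℤ) • lmul false (CP q n) := by
  rw [AP, BP, CP, lmul_sum, lmul_sum, Finset.smul_sum, ← Finset.sum_add_distrib]
  refine Finset.sum_congr rfl fun k _ => ?_
  rw [sh_xx, smul_add, lmul_smul, lmul_smul, smul_comm (q ^ (2:ℤ)), smul_smul]

lemma BP_rec (hq : q ≠ 0) (n : ℕ) :
    BP q (n+1) = q ^ (-1:ℤ) • lmul true (AP q n) + lmul false (DP q (n+1)) := by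
  rw [BP, DP, AP, Finset.sum_range_succ' _ (n+1), Finset.sum_range_succ' _ (n+1),
    lmul_add, lmul_sum, lmul_sum, Finset.smul_sum]
  have h1 : ∀ k ∈ Finset.range (n+1),
      q ^ (((n+1:ℕ):ℤ) - 2*((k+1:ℕ):ℤ)) • sh q (gw (k+1)) (altX (n+1-(k+1))) =
      q ^ (-1:ℤ) • lmul true (q ^ ((n:ℤ) - 2*(k:ℤ)) • sh q (altX k) (altX (n-k))) +
      lmul false (q ^ (((n+1:ℕ):ℤ) - 2*((k+1:ℕ):ℤ)) • sh q (gw (k+1)) (gw (n+1-(k+1)))) := by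
    intro k _
    rw [show n+1-(k+1) = n-k from by omega, sh_gx, smul_add, lmul_smul, lmul_smul, smul_smul,
      zps hq (show ((n+1:ℕ):ℤ) - 2*((k+1:ℕ):ℤ) = -1 + ((n:ℤ) - 2*(k:ℤ)) by push_cast; ring)]
  rw [Finset.sum_congr rfl h1, Finset.sum_add_distrib]
  simp only [Nat.sub_zero]
  rw [show gw 0 = ([]:Wd) from rfl, sh_nil, sh_nil, lmul_smul, lmul_single,
    show (false :: gw (n+1) : Wd) = altX (n+1) from (altX_cons _).symm]
  abel

lemma CP_rec (hq : q ≠ 0) (n : ℕ) :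
    CP q (n+1) = q ^ (-1:ℤ) • lmul true (AP q n) + lmul false (DP q (n+1)) := by
  rw [CP, DP, AP, Finset.sum_range_succ _ (n+1), Finset.sum_range_succ _ (n+1),
    lmul_add, lmul_sum, lmul_sum, Finset.smul_sum]
  have h1 : ∀ k ∈ Finset.range (n+1),
      q ^ (((n+1:ℕ):ℤ) - 2*(k:ℤ)) • sh q (altX k) (gw (n+1-k)) =
      q ^ (-1:ℤ) • lmul true (q ^ ((n:ℤ) - 2*(k:ℤ)) • sh q (altX k) (altX (n-k))) +
      lmul false (q ^ (((n+1:ℕ):ℤ) - 2*(k:ℤ)) • sh q (gw k) (gw (n+1-k))) := by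
    intro k hk
    have hk' : k < n+1 := Finset.mem_range.mp hk
    rw [show n+1-k = (n-k)+1 from by omega, sh_xg, smul_add, lmul_smul, lmul_smul, smul_smul,
      smul_smul,
      zps hq (show ((n+1:ℕ):ℤ) - 2*(k:ℤ) = 1 + ((n:ℤ) - 2*(k:ℤ)) by push_cast; ring),
      show q ^ (1:ℤ) * q ^ ((n:ℤ) - 2*(k:ℤ)) * q ^ (-2:ℤ)
         = q ^ (-1:ℤ) * q ^ ((n:ℤ) - 2*(k:ℤ)) by
        rw [← zpow_add₀ hq, ← zpow_add₀ hq, ← zpow_add₀ hq]; ring_nf]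
    exact add_comm _ _
  rw [Finset.sum_congr rfl h1, Finset.sum_add_distrib, Nat.sub_self,
    show gw 0 = ([]:Wd) from rfl, sh_altX_nil, sh_gw_nil,
    lmul_smul, lmul_single,
    show (false :: gw (n+1) : Wd) = altX (n+1) from (altX_cons _).symm]
  abel

lemma DP_rec (hq : q ≠ 0) (n : ℕ) :
    DP q (n+1) = q ^ (1:ℤ) • lmul true (BP q n) + q ^ (-1:ℤ) • lmul true (CP q n) := by
  rw [DP, BP, CP, Finset.sum_range_succ' _ (n+1), Finset.sum_range_succ _ n,
    Finset.sum_range_succ' _ n, Finset.sum_range_succ _ n,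
    lmul_add, lmul_add, lmul_sum, lmul_sum, smul_add, smul_add, Finset.smul_sum,
    Finset.smul_sum]
  have h1 : ∀ i ∈ Finset.range n,
      q ^ (((n+1:ℕ):ℤ) - 2*((i+1:ℕ):ℤ)) • sh q (gw (i+1)) (gw (n+1-(i+1))) =
      q ^ (1:ℤ) • lmul true (q ^ ((n:ℤ) - 2*((i+1:ℕ):ℤ)) • sh q (gw (i+1)) (altX (n-(i+1)))) +
      q ^ (-1:ℤ) • lmul true (q ^ ((n:ℤ) - 2*(i:ℤ)) • sh q (altX i) (gw (n-i))) := by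
    intro i hi
    have hi' : i < n := Finset.mem_range.mp hi
    rw [show n+1-(i+1) = (n-(i+1))+1 from by omega, sh_gg,
      show (n-(i+1))+1 = n-i from by omega, smul_add, lmul_smul, lmul_smul, smul_smul,
      smul_smul,
      zps hq (show ((n+1:ℕ):ℤ) - 2*((i+1:ℕ):ℤ) = -1 + ((n:ℤ) - 2*(i:ℤ)) by push_cast; ring)]
    nth_rewrite 2 [show q ^ (-1:ℤ) * q ^ ((n:ℤ) - 2*(i:ℤ))
        = q ^ (1:ℤ) * q ^ ((n:ℤ) - 2*((i+1:ℕ):ℤ)) by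
      rw [← zpow_add₀ hq, ← zpow_add₀ hq]; congr 1; push_cast; ring]
    exact add_comm _ _
  rw [Finset.sum_congr rfl h1, Finset.sum_add_distrib]
  simp only [Nat.sub_self, Nat.sub_zero]
  rw [show gw 0 = ([]:Wd) from rfl, sh_nil, sh_nil, sh_altX_nil, sh_gw_nil,
    lmul_smul, lmul_smul, lmul_single,
    show (true :: altX n : Wd) = gw (n+1) from (gw_succ _).symm, smul_smul, smul_smul,
    show q ^ (1:ℤ) * q ^ ((n:ℤ) - 2*((0:ℕ):ℤ)) = q ^ (((n+1:ℕ):ℤ) - 2*((0:ℕ):ℤ)) from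
      ((zps hq (by push_cast; ring)).symm),
    show q ^ (-1:ℤ) * q ^ ((n:ℤ) - 2*(n:ℤ)) = q ^ (((n+1:ℕ):ℤ) - 2*((n+1:ℕ):ℤ)) from
      ((zps hq (by push_cast; ring)).symm)]
  abel

/-! ### closed forms -/

def PP (f : V F) : V F := lmul false (lmul true f) + lmul true (lmul false f)

def PX : ℕ → V F
  | 0 => Finsupp.single [false] 1
  | n + 1 => PP (PX n)

lemma PX_succ (n : ℕ) : PX (n+1) =
    lmul false (lmul true (PX n : V F)) + lmul true (lmul false (PX n)) := rfl

lemma BB_zero : BB q 0 = PX 0 := by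
  simp [BB, PX, sh_nil, gw, altX]

lemma CC_zero : CC q 0 = PX 0 := by
  have := sh_altX_nil (q := q) 0
  simp only [altX] at this
  simp [CC, PX, this, gw, altX]

lemma BP_zero : BP q 0 = PX 0 := by
  simp [BP, BB, sh_nil, gw, altX, PX]

lemma CP_zero : CP q 0 = PX 0 := by
  have := sh_altX_nil (q := q) 0
  simp only [altX] at this
  simp [CP, PX, this, gw, altX]

lemma key (hq : q ≠ 0) (n : ℕ) :
    AA q n = (q * (q+q⁻¹)^(n+1)) • lmul false (PX n)
    ∧ BB q (n+1) = ((q+q⁻¹)^(n+1)) • lmul false (lmul true (PX n))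
        + (q*q*(q+q⁻¹)^(n+1)) • lmul true (lmul false (PX n))
    ∧ CC q (n+1) = ((q+q⁻¹)^(n+1)) • lmul false (lmul true (PX n))
        + (q⁻¹*q⁻¹*(q+q⁻¹)^(n+1)) • lmul true (lmul false (PX n))
    ∧ DD q (n+1) = ((q+q⁻¹)^(n+1)) • lmul true (PX n) := by
  have e1 : q ^ (1:ℤ) = q := zpow_one q
  have em1 : q ^ (-1:ℤ) = q⁻¹ := by rw [zpow_neg, zpow_one]
  have e2 : q ^ (2:ℤ) = q * q := by
    rw [show (2:ℤ) = 1 + 1 by norm_num, zpow_add₀ hq, zpow_one]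
  have em3 : q ^ (-3:ℤ) = q⁻¹ * q⁻¹ * q⁻¹ := by
    rw [show (-3:ℤ) = -1 + -1 + -1 by norm_num, zpow_add₀ hq, zpow_add₀ hq, em1]
  induction n with
  | zero =>
    have hA : AA q 0 = (q * (q+q⁻¹)^(0+1)) • lmul false (PX 0) := by
      rw [AA_rec, BB_zero, CC_zero, e2]
      match_scalars <;> (field_simp; try ring_nf; try field_simp; try ring)
    have hD : DD q (0+1) = ((q+q⁻¹)^(0+1)) • lmul true (PX 0) := by
      rw [DD_rec hq, BB_zero, CC_zero, e1, em1]
      match_scalars <;> (field_simp; try ring_nf; try field_simp; try ring)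
    refine ⟨hA, ?_, ?_, hD⟩
    · rw [BB_rec hq, hA, hD, e1]
      simp only [lmul_smul, lmul_add]
      match_scalars <;> (field_simp; try ring)
    · rw [CC_rec hq, hA, hD, em3]
      simp only [lmul_smul, lmul_add]
      match_scalars <;> (field_simp; try ring)
  | succ n ih =>
    obtain ⟨ihA, ihB, ihC, ihD⟩ := ih
    have hA : AA q (n+1) = (q * (q+q⁻¹)^(n+1+1)) • lmul false (PX (n+1)) := by
      rw [AA_rec, ihB, ihC, e2]
      simp only [PX_succ, lmul_add, lmul_smul]
      match_scalars <;> (field_simp; try ring_nf; try field_simp; try ring)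
    have hD : DD q (n+1+1) = ((q+q⁻¹)^(n+1+1)) • lmul true (PX (n+1)) := by
      rw [DD_rec hq, ihB, ihC, e1, em1]
      simp only [PX_succ, lmul_add, lmul_smul]
      match_scalars <;> (field_simp; try ring_nf; try field_simp; try ring)
    refine ⟨hA, ?_, ?_, hD⟩
    · rw [BB_rec hq, hA, hD, e1]
      simp only [lmul_smul, lmul_add]
      match_scalars <;> (field_simp; try ring)
    · rw [CC_rec hq, hA, hD, em3]
      simp only [lmul_smul, lmul_add]
      match_scalars <;> (field_simp; try ring)

lemma keyP (hq : q ≠ 0) (n : ℕ) :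
    AP q n = (q * (q+q⁻¹)^(n+1)) • lmul false (PX n)
    ∧ BP q (n+1) = ((q+q⁻¹)^(n+1)) • (PX (n+1) : V F)
    ∧ CP q (n+1) = ((q+q⁻¹)^(n+1)) • (PX (n+1) : V F)
    ∧ DP q (n+1) = ((q+q⁻¹)^(n+1)) • lmul true (PX n) := by
  have e1 : q ^ (1:ℤ) = q := zpow_one q
  have em1 : q ^ (-1:ℤ) = q⁻¹ := by rw [zpow_neg, zpow_one]
  have e2 : q ^ (2:ℤ) = q * q := by
    rw [show (2:ℤ) = 1 + 1 by norm_num, zpow_add₀ hq, zpow_one]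
  induction n with
  | zero =>
    have hA : AP q 0 = (q * (q+q⁻¹)^(0+1)) • lmul false (PX 0) := by
      rw [AP_rec, BP_zero, CP_zero, e2]
      match_scalars <;> (field_simp; try ring_nf; try field_simp; try ring)
    have hD : DP q (0+1) = ((q+q⁻¹)^(0+1)) • lmul true (PX 0) := by
      rw [DP_rec hq, BP_zero, CP_zero, e1, em1]
      match_scalars <;> (field_simp; try ring_nf; try field_simp; try ring)
    refine ⟨hA, ?_, ?_, hD⟩
    · rw [BP_rec hq, hA, hD, em1]
      simp only [PX_succ, lmul_smul, lmul_add]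
      match_scalars <;> (field_simp; try ring)
    · rw [CP_rec hq, hA, hD, em1]
      simp only [PX_succ, lmul_smul, lmul_add]
      match_scalars <;> (field_simp; try ring)
  | succ n ih =>
    obtain ⟨ihA, ihB, ihC, ihD⟩ := ih
    have hA : AP q (n+1) = (q * (q+q⁻¹)^(n+1+1)) • lmul false (PX (n+1)) := by
      rw [AP_rec, ihB, ihC, e2]
      simp only [lmul_smul]
      match_scalars <;> (field_simp; try ring_nf; try field_simp; try ring)
    have hD : DP q (n+1+1) = ((q+q⁻¹)^(n+1+1)) • lmul true (PX (n+1)) := by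
      rw [DP_rec hq, ihB, ihC, e1, em1]
      simp only [PX_succ, lmul_add, lmul_smul]
      match_scalars <;> (field_simp; try ring_nf; try field_simp; try ring)
    refine ⟨hA, ?_, ?_, hD⟩
    · rw [BP_rec hq, hA, hD, em1]
      simp only [PX_succ, lmul_smul, lmul_add]
      match_scalars <;> (field_simp; try ring)
    · rw [CP_rec hq, hA, hD, em1]
      simp only [PX_succ, lmul_smul, lmul_add]
      match_scalars <;> (field_simp; try ring)

/-! ### concatenation lemmas -/

lemma st_Wm (k m : ℕ) : st q (Wm F k) (Wm F m) = sh q (altX k) (altX m) := by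
  simp [st, Wm, Finsupp.sum_single_index]

lemma cm_single_one (u : Wd) (g : V F) :
    cm (Finsupp.single u (1:F)) g = Finsupp.mapDomain (u ++ ·) g := by
  rw [cm, Finsupp.sum_single_index, Finsupp.mapDomain]
  · simp
  · simp

lemma cm_Wm0 (g : V F) : cm (Wm F 0) g = lmul false g := by
  rw [Wm, show altX 0 = [false] from rfl, cm_single_one, lmul]
  congr 1

lemma cm_add_left (f g h : V F) : cm (f + g) h = cm f h + cm g h := by
  rw [cm, cm, cm, Finsupp.sum_add_index']
  · intro u
    simp
  · intro u c1 c2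
    rw [← Finsupp.sum_add]
    congr 1
    funext v cv
    rw [add_mul, Finsupp.single_add]

lemma cm_lmul (a : Bool) (f g : V F) : cm (lmul a f) g = lmul a (cm f g) := by
  simp only [cm, lmul]
  rw [Finsupp.sum_mapDomain_index_inj (List.cons_injective), Finsupp.mapDomain_sum]
  congr 1
  funext u cu
  rw [Finsupp.mapDomain_sum]
  congr 1
  funext v cv
  rw [Finsupp.mapDomain_single]
  rfl

lemma cpow_Wm (n : ℕ) : cm (cpow (Gt F 1 + Gn F 1) n) (Wm F 0) = (PX n : V F) := by
  induction n with
  | zero =>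
    rw [cpow, cm_single_one]
    rw [show ((fun v => [] ++ v) : Wd → Wd) = id from funext fun v => rfl,
      Finsupp.mapDomain_id]
    rfl
  | succ n ih =>
    have hP : cm (Gt F 1 + Gn F 1 : V F) (cpow (Gt F 1 + Gn F 1) n)
        = lmul false (lmul true (cpow (Gt F 1 + Gn F 1) n))
          + lmul true (lmul false (cpow (Gt F 1 + Gn F 1) n)) := by
      rw [show (Gt F 1 + Gn F 1 : V F)
          = Finsupp.single [false, true] 1 + Finsupp.single [true, false] 1 from rfl,
        cm_add_left, cm_single_one, cm_single_one,
        show ((fun v => [false, true] ++ v) : Wd → Wd)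
          = (fun v => false :: v) ∘ (fun v => true :: v) from funext fun v => rfl,
        show ((fun v => [true, false] ++ v) : Wd → Wd)
          = (fun v => true :: v) ∘ (fun v => false :: v) from funext fun v => rfl,
        Finsupp.mapDomain_comp, Finsupp.mapDomain_comp]
      rfl
    rw [cpow, hP, cm_add_left, cm_lmul, cm_lmul, cm_lmul, cm_lmul, ih, PX_succ]
end StmtAux
/-- `Σ_{k=0}^n q^{2k−n} W_{−k} ⋆ W_{k−n} = Σ_{k=0}^n q^{n−2k} W_{−k} ⋆ W_{k−n}
= q [2]_q^{n+1} x(xy+yx)^n x`. -/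
theorem stmt_11 {F : Type*} [Field F] (q : F) (hq : q ≠ 0)
    (hq' : ∀ n : ℕ, 0 < n → q ^ n ≠ 1) (n : ℕ) :
    (∑ k ∈ Finset.range (n + 1),
        q ^ (2 * (k : ℤ) - (n : ℤ)) • st q (Wm F k) (Wm F (n - k)))
      = (∑ k ∈ Finset.range (n + 1),
          q ^ ((n : ℤ) - 2 * (k : ℤ)) • st q (Wm F k) (Wm F (n - k))) ∧
    (∑ k ∈ Finset.range (n + 1),
        q ^ (2 * (k : ℤ) - (n : ℤ)) • st q (Wm F k) (Wm F (n - k)))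
      = (q * (q + q⁻¹) ^ (n + 1)) •
          cm (Wm F 0) (cm (cpow (Gt F 1 + Gn F 1) n) (Wm F 0)) := by
  have e1 : (∑ k ∈ Finset.range (n + 1),
      q ^ (2 * (k : ℤ) - (n : ℤ)) • st q (Wm F k) (Wm F (n - k))) = StmtAux.AA q n := by
    rw [StmtAux.AA]
    exact Finset.sum_congr rfl fun k _ => by rw [StmtAux.st_Wm]
  have e2 : (∑ k ∈ Finset.range (n + 1),
      q ^ ((n : ℤ) - 2 * (k : ℤ)) • st q (Wm F k) (Wm F (n - k))) = StmtAux.AP q n := by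
    rw [StmtAux.AP]
    exact Finset.sum_congr rfl fun k _ => by rw [StmtAux.st_Wm]
  constructor
  · rw [e1, e2, (StmtAux.key hq n).1, (StmtAux.keyP hq n).1]
  · rw [e1, (StmtAux.key hq n).1, StmtAux.cpow_Wm, StmtAux.cm_Wm0]
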